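/- Let λ > 4 and define F₁(b,g) = -b + λbg and F₂(b,g) = -g - λbg + λb(1-b-g). Then the system F₁(b,g)=0, F₂(b,g)=0 has exactly two solutions with (b,g) ∈ (0,1)×(0,1), namely g = 1/λ and b one of the two distinct roots of λ²b² - λ(λ-2)b + 1 = 0, both of which lie in (0,1). -/

import Mathlib

theorem stmt_1 (lam : ℝ) (hl : 4 < lam) :
    ∃ b₁ b₂ : ℝ, b₁ ≠ b₂ ∧ b₁ ∈ Set.Ioo (0:ℝ) 1 ∧ b₂ ∈ Set.Ioo (0:ℝ) 1 ∧
      lam ^ 2 * b₁ ^ 2 - lam * (lam - 2) * b₁ + 1 = 0 ∧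
      lam ^ 2 * b₂ ^ 2 - lam * (lam - 2) * b₂ + 1 = 0 ∧
      ∀ b g : ℝ, b ∈ Set.Ioo (0:ℝ) 1 → g ∈ Set.Ioo (0:ℝ) 1 →
        ((-b + lam * b * g = 0 ∧ -g - lam * b * g + lam * b * (1 - b - g) = 0)
          ↔ (g = 1 / lam ∧ (b = b₁ ∨ b = b₂))) := by
  have hlam0 : (0:ℝ) < lam := by linarith
  have hD : (0:ℝ) < lam ^ 2 - 4 * lam := by nlinarith
  set s := Real.sqrt (lam ^ 2 - 4 * lam) with hsdef
  have hs2 : s ^ 2 = lam ^ 2 - 4 * lam := Real.sq_sqrt hD.le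
  have hs0 : 0 < s := Real.sqrt_pos.mpr hD
  have hslt : s < lam - 2 := by nlinarith
  set b₁ := ((lam - 2) - s) / (2 * lam) with hb1
  set b₂ := ((lam - 2) + s) / (2 * lam) with hb2
  have h2l : (0:ℝ) < 2 * lam := by linarith
  have hb1pos : 0 < b₁ := div_pos (by linarith) h2l
  have hb2pos : 0 < b₂ := div_pos (by linarith) h2l
  have hb1lt : b₁ < 1 := by rw [hb1, div_lt_one h2l]; linarith
  have hb2lt : b₂ < 1 := by rw [hb2, div_lt_one h2l]; nlinarith
  have hq1 : lam ^ 2 * b₁ ^ 2 - lam * (lam - 2) * b₁ + 1 = 0 := by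
    rw [hb1]; field_simp; linear_combination hs2
  have hq2 : lam ^ 2 * b₂ ^ 2 - lam * (lam - 2) * b₂ + 1 = 0 := by
    rw [hb2]; field_simp; linear_combination hs2
  refine ⟨b₁, b₂, ?_, ⟨hb1pos, hb1lt⟩, ⟨hb2pos, hb2lt⟩, hq1, hq2, ?_⟩
  · intro h
    rw [hb1, hb2, div_eq_div_iff (by linarith) (by linarith)] at h
    nlinarith
  · intro b g hb hg
    obtain ⟨hb0, hb1'⟩ := hb
    obtain ⟨hg0, hg1'⟩ := hg
    constructor
    · rintro ⟨h1, h2⟩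
      have hgl : g = 1 / lam := by
        have : b * (lam * g - 1) = 0 := by ring_nf; linarith [h1]
        rcases mul_eq_zero.mp this with h | h
        · exact absurd h (ne_of_gt hb0)
        · field_simp; linarith
      refine ⟨hgl, ?_⟩
      subst hgl
      have hq : lam ^ 2 * b ^ 2 - lam * (lam - 2) * b + 1 = 0 := by
        field_simp at h2
        linear_combination -h2
      have hsum : b₁ + b₂ = (lam - 2) / lam := by
        rw [hb1, hb2]; field_simp; ring
      have hprod : b₁ * b₂ = 1 / lam ^ 2 := by
        rw [hb1, hb2]; field_simp; linear_combination (-1) * hs2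
      have hfac : lam ^ 2 * ((b - b₁) * (b - b₂)) = 0 := by
        have hexp : lam ^ 2 * ((b - b₁) * (b - b₂))
            = lam ^ 2 * b ^ 2 - lam ^ 2 * ((b₁ + b₂) * b) + lam ^ 2 * (b₁ * b₂) := by ring
        rw [hexp, hsum, hprod]
        field_simp
        linear_combination hq
      have := mul_eq_zero.mp hfac
      rcases this with h | h
      · exact absurd h (by positivity)
      · rcases mul_eq_zero.mp h with h | h
        · left; linarith
        · right; linarith
    · rintro ⟨hgl, hbcase⟩
      subst hgl
      have hq : lam ^ 2 * b ^ 2 - lam * (lam - 2) * b + 1 = 0 := by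
        rcases hbcase with h | h <;> subst h <;> assumption
      constructor
      · field_simp; ring
      · field_simp
        linear_combination -hq
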